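/- For λ ≥ 2 and 0 < α ≤ 1/2, the principal value integral ∫_{−λ^α}^{λ^α} √(λ+s) · (1/s − 1/(λ+s)) ds is O(λ^{α−1/2}): there is an absolute constant K with |P.V. ∫_{−λ^α}^{λ^α} √(λ+s)(1/s − 1/(λ+s)) ds| ≤ K·λ^{α−1/2}. -/

import Mathlib

open MeasureTheory Filter
open intervalIntegral

/-- for λ ≥ 2 and 0 < α ≤ 1/2, the principal value integral
P.V. ∫_{−λ^α}^{λ^α} √(λ+s)·(1/s − 1/(λ+s)) ds (with respect to the singularity
at s = 0) exists and is ≤ K·λ^{α−1/2} in absolute value, for an absolute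
constant K. -/
theorem pv_middle_interval_bound :
    ∃ K : ℝ, 0 < K ∧ ∀ lam α : ℝ, 2 ≤ lam → 0 < α → α ≤ 1 / 2 →
      ∃ L : ℝ,
        Tendsto
          (fun ε : ℝ =>
            (∫ s in Set.Ioo (-(lam ^ α)) (-ε),
                Real.sqrt (lam + s) * (1 / s - 1 / (lam + s))) +
            ∫ s in Set.Ioo ε (lam ^ α),
                Real.sqrt (lam + s) * (1 / s - 1 / (lam + s)))
          (nhdsWithin 0 (Set.Ioi 0)) (nhds L) ∧
        |L| ≤ K * lam ^ (α - 1 / 2) := by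
  refine ⟨4, by norm_num, fun lam α hlam hα hα2 => ?_⟩
  set a := lam ^ α with ha
  have hlam0 : (0:ℝ) < lam := by linarith
  have ha0 : 0 < a := Real.rpow_pos_of_pos hlam0 α
  have hsl : Real.sqrt lam ≤ 3/4 * lam := by
    have h1 : lam ≤ (3/4*lam)^2 := by nlinarith
    calc Real.sqrt lam ≤ Real.sqrt ((3/4*lam)^2) := Real.sqrt_le_sqrt h1
    _ = 3/4*lam := Real.sqrt_sq (by linarith)
  have haa : a ≤ Real.sqrt lam := by
    rw [Real.sqrt_eq_rpow]
    exact Real.rpow_le_rpow_of_exponent_le (by linarith) hα2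
  have hal : a ≤ 3/4 * lam := haa.trans hsl
  have hs4 : ∀ s : ℝ, -a ≤ s → lam / 4 ≤ lam + s := fun s hs => by linarith
  have hsqlam : 0 < Real.sqrt lam := Real.sqrt_pos.mpr hlam0
  have hhalf : Real.sqrt (lam/4) = Real.sqrt lam / 2 := by
    rw [show lam/4 = lam * (1/2)^2 by ring, Real.sqrt_mul hlam0.le,
      Real.sqrt_sq (by norm_num)]
    ring
  have hxlow : ∀ s : ℝ, -a ≤ s → Real.sqrt lam / 2 ≤ Real.sqrt (lam + s) := fun s hs => by
    rw [← hhalf]; exact Real.sqrt_le_sqrt (hs4 s hs)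
  have hxpos : ∀ s : ℝ, -a ≤ s → 0 < Real.sqrt (lam + s) := fun s hs =>
    lt_of_lt_of_le (by positivity) (hxlow s hs)
  set g : ℝ → ℝ := fun s => 1/(Real.sqrt (lam+s) + Real.sqrt lam) - 1/Real.sqrt (lam+s)
    with hg
  -- continuity / integrability of g on Icc (-a) a
  have hgcont : ContinuousOn g (Set.Icc (-a) a) := by
    have h1 : ContinuousOn (fun s => Real.sqrt (lam + s)) (Set.Icc (-a) a) :=
      (Real.continuous_sqrt.comp (continuous_const.add continuous_id)).continuousOn
    apply ContinuousOn.sub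
    · exact continuousOn_const.div (h1.add continuousOn_const)
        (fun s hs => by have := hxpos s hs.1; positivity)
    · exact continuousOn_const.div h1 (fun s hs => (hxpos s hs.1).ne')
  have hgint : IntegrableOn g (Set.Icc (-a) a) := hgcont.integrableOn_Icc
  have hgii : ∀ x ∈ Set.Icc (-a) a, ∀ y ∈ Set.Icc (-a) a, IntervalIntegrable g volume x y := by
    intro x hx y hy
    exact (hgint.mono_set (Set.uIcc_subset_Icc hx hy)).intervalIntegrable
  set F : ℝ → ℝ := fun x => ∫ t in (-a)..x, g t with hF
  have hFc : ContinuousOn F (Set.Icc (-a) a) := by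
    have := intervalIntegral.continuousOn_primitive_interval (a := -a) (b := a)
      (f := g) (μ := volume) (by rwa [Set.uIcc_of_le (by linarith)])
    rwa [Set.uIcc_of_le (by linarith : -a ≤ a)] at this
  have hF0 : ContinuousAt F 0 := by
    apply hFc.continuousAt (Icc_mem_nhds (by linarith) ha0)
  refine ⟨F a, ?_, ?_⟩
  · -- the limit
    have hmain : Tendsto (fun ε : ℝ => F (-ε) + (F a - F ε)) (nhdsWithin 0 (Set.Ioi 0))
        (nhds (F a)) := by
      have h1 : Tendsto (fun ε : ℝ => F (-ε) + (F a - F ε)) (nhds 0)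
          (nhds (F (-0) + (F a - F 0))) := by
        apply Tendsto.add
        · have hn : Tendsto (fun ε : ℝ => -ε) (nhds 0) (nhds 0) := by
            simpa using (continuous_neg.tendsto (0:ℝ))
          have := hF0.tendsto.comp hn
          simpa [Function.comp_def] using this
        · exact tendsto_const_nhds.sub hF0.tendsto
      have h2 : F (-0) + (F a - F 0) = F a := by norm_num
      rw [h2] at h1
      exact h1.mono_left nhdsWithin_le_nhds
    refine hmain.congr' ?_
    filter_upwards [Ioo_mem_nhdsGT_of_mem (Set.left_mem_Ico.mpr ha0)] with ε hε
    obtain ⟨hε0, hεa⟩ := hε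
    -- pointwise identity on each side
    have hptid : ∀ s : ℝ, -a ≤ s → s ≠ 0 →
        Real.sqrt (lam + s) * (1 / s - 1 / (lam + s)) = g s + Real.sqrt lam * (1/s) := by
      intro s hs hs0
      have hx := hxpos s hs
      have hls : 0 < lam + s := lt_of_lt_of_le (by linarith) (hs4 s hs)
      set x := Real.sqrt (lam+s) with hxdef
      set y := Real.sqrt lam with hydef
      have hx2 : x * x = lam + s := Real.mul_self_sqrt hls.le
      have hy2 : y * y = lam := Real.mul_self_sqrt hlam0.le
      have hy0 : 0 < y := hsqlam
      have hxy : x + y ≠ 0 := by positivity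
      have hkey : 1/(x+y) = (x-y)/s := by
        rw [div_eq_div_iff hxy hs0, one_mul]
        linear_combination hy2 - hx2
      show x * (1/s - 1/(lam+s)) = (1/(x+y) - 1/x) + y*(1/s)
      rw [← hx2, hkey]
      field_simp
      ring
    -- right side integral
    have hint_inv_r : IntegrableOn (fun s : ℝ => Real.sqrt lam * (1/s)) (Set.Ioo ε a) := by
      apply (ContinuousOn.integrableOn_Icc ?_).mono_set Set.Ioo_subset_Icc_self
      exact continuousOn_const.mul (continuousOn_const.div continuousOn_id
        (fun s hs => by rcases hs with ⟨h1, h2⟩; exact ne_of_gt (lt_of_lt_of_le hε0 h1)))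
    have hint_inv_l : IntegrableOn (fun s : ℝ => Real.sqrt lam * (1/s))
        (Set.Ioo (-a) (-ε)) := by
      apply (ContinuousOn.integrableOn_Icc ?_).mono_set Set.Ioo_subset_Icc_self
      exact continuousOn_const.mul (continuousOn_const.div continuousOn_id
        (fun s hs => by rcases hs with ⟨h1, h2⟩; exact ne_of_lt (lt_of_le_of_lt h2 (by linarith))))
    have hgint_r : IntegrableOn g (Set.Ioo ε a) :=
      hgint.mono_set (fun s hs => ⟨by rcases hs with ⟨h1,h2⟩; linarith, le_of_lt hs.2⟩)
    have hgint_l : IntegrableOn g (Set.Ioo (-a) (-ε)) :=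
      hgint.mono_set (fun s hs => ⟨le_of_lt hs.1, by rcases hs with ⟨h1,h2⟩; linarith⟩)
    have hr : (∫ s in Set.Ioo ε a, Real.sqrt (lam + s) * (1 / s - 1 / (lam + s)))
        = (∫ s in Set.Ioo ε a, g s) + Real.sqrt lam * (Real.log a - Real.log ε) := by
      rw [show (∫ s in Set.Ioo ε a, Real.sqrt (lam + s) * (1 / s - 1 / (lam + s)))
          = ∫ s in Set.Ioo ε a, (g s + Real.sqrt lam * (1/s)) from
        setIntegral_congr_fun measurableSet_Ioo (fun s hs => hptid s
          (by rcases hs with ⟨h1,h2⟩; linarith) (ne_of_gt (lt_trans hε0 hs.1)))]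
      rw [integral_add hgint_r hint_inv_r, MeasureTheory.integral_const_mul]
      congr 1
      rw [← integral_Ioc_eq_integral_Ioo, ← intervalIntegral.integral_of_le hεa.le,
        integral_one_div (by rw [Set.uIcc_of_le hεa.le]; intro h; exact absurd h.1 (by linarith)),
        Real.log_div (by linarith) (by linarith)]
    have hl : (∫ s in Set.Ioo (-a) (-ε), Real.sqrt (lam + s) * (1 / s - 1 / (lam + s)))
        = (∫ s in Set.Ioo (-a) (-ε), g s) + Real.sqrt lam * (Real.log ε - Real.log a) := by
      rw [show (∫ s in Set.Ioo (-a) (-ε), Real.sqrt (lam + s) * (1 / s - 1 / (lam + s)))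
          = ∫ s in Set.Ioo (-a) (-ε), (g s + Real.sqrt lam * (1/s)) from
        setIntegral_congr_fun measurableSet_Ioo (fun s hs => hptid s (le_of_lt hs.1)
          (by rcases hs with ⟨h1,h2⟩; intro h; rw [h] at h2; linarith))]
      rw [integral_add hgint_l hint_inv_l, MeasureTheory.integral_const_mul]
      congr 1
      have hnz : (0:ℝ) ∉ Set.uIcc (-a) (-ε) := by
        rw [Set.uIcc_of_le (by linarith : -a ≤ -ε)]
        intro h
        rcases h with ⟨h1, h2⟩
        linarith
      rw [← integral_Ioc_eq_integral_Ioo,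
        ← intervalIntegral.integral_of_le (by linarith : -a ≤ -ε),
        integral_one_div hnz]
      rw [show (-ε)/(-a) = ε/a by ring, Real.log_div (by linarith) (by linarith)]
    rw [hl, hr]
    have hFr : (∫ s in Set.Ioo ε a, g s) = F a - F ε := by
      rw [hF, ← integral_Ioc_eq_integral_Ioo, ← intervalIntegral.integral_of_le hεa.le]
      exact (intervalIntegral.integral_interval_sub_left
        (hgii (-a) (by constructor <;> linarith) a (by constructor <;> linarith))
        (hgii (-a) (by constructor <;> linarith) ε (by constructor <;> linarith))).symm
    have hFl : (∫ s in Set.Ioo (-a) (-ε), g s) = F (-ε) := by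
      have hFe : F (-ε) = ∫ t in (-a)..(-ε), g t := rfl
      rw [hFe, intervalIntegral.integral_of_le (by linarith : -a ≤ -ε),
        integral_Ioc_eq_integral_Ioo]
    rw [hFr, hFl]; ring
  · -- the bound
    have hbound : ∀ s ∈ Set.uIoc (-a) a, ‖g s‖ ≤ 2 / Real.sqrt lam := by
      intro s hs
      rw [Set.uIoc_of_le (by linarith : -a ≤ a)] at hs
      have hs1 : -a ≤ s := le_of_lt hs.1
      have hx := hxpos s hs1
      have hxl := hxlow s hs1
      have h1 : (1:ℝ)/(Real.sqrt (lam+s) + Real.sqrt lam) ≤ 1/Real.sqrt (lam+s) := by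
        apply one_div_le_one_div_of_le hx; linarith
      have h2 : (0:ℝ) < 1/(Real.sqrt (lam+s) + Real.sqrt lam) := by positivity
      have h3 : (1:ℝ)/Real.sqrt (lam+s) ≤ 2/Real.sqrt lam := by
        rw [div_le_div_iff₀ hx hsqlam]
        nlinarith
      simp only [hg, Real.norm_eq_abs]
      rw [abs_sub_comm, abs_of_nonneg (by linarith)]
      linarith
    have h4 := intervalIntegral.norm_integral_le_of_norm_le_const hbound
    rw [hF]
    have h5 : |(∫ t in (-a)..a, g t)| ≤ 2/Real.sqrt lam * |a - (-a)| := h4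
    have h6 : |a - (-a)| = 2*a := by rw [abs_of_nonneg (by linarith)]; ring
    rw [h6] at h5
    have h7 : 2/Real.sqrt lam * (2*a) = 4 * (a / Real.sqrt lam) := by ring
    have h8 : a / Real.sqrt lam = lam ^ (α - 1/2) := by
      rw [ha, Real.sqrt_eq_rpow, ← Real.rpow_sub hlam0]
    calc |F a| ≤ 2/Real.sqrt lam * (2*a) := h5
    _ = 4 * (a / Real.sqrt lam) := h7
    _ = 4 * lam ^ (α - 1/2) := by rw [h8]
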